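/- In the half-space model of ℍⁿ with metric δ_{ij}/xₙ², the radial projection x ↦ x/|x| (where |x| is the Euclidean norm) is a Riemannian submersion from ℍⁿ onto the unit Euclidean hemisphere S = {x ∈ ℍⁿ : |x| = 1} equipped with its induced metric; moreover S with this induced metric is isometric to hyperbolic space of dimension n−1. -/

import Mathlib

open Finset

namespace Stmt12Aux

variable {k : ℕ}

noncomputable def DN (x : Fin k → ℝ) : (Fin k → ℝ) →L[ℝ] ℝ :=
  ∑ i, (2 * x i) • (ContinuousLinearMap.proj i : (Fin k → ℝ) →L[ℝ] ℝ)

lemma DN_apply (x u : Fin k → ℝ) : DN x u = ∑ i, 2 * x i * u i := by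
  simp [DN, mul_assoc]

lemma hasFDerivAt_sumsq (x : Fin k → ℝ) :
    HasFDerivAt (fun y : Fin k → ℝ => ∑ i, y i ^ 2) (DN x) x := by
  have h : ∀ i ∈ univ, HasFDerivAt (fun y : Fin k → ℝ => y i ^ 2)
      ((2 * x i) • (ContinuousLinearMap.proj i : (Fin k → ℝ) →L[ℝ] ℝ)) x := by
    intro i _
    have h : HasFDerivAt (fun y : Fin k → ℝ => y i) (ContinuousLinearMap.proj (R := ℝ) (φ := fun _ : Fin k => ℝ) i) x := hasFDerivAt_apply i x
    have h2 := h.mul h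
    have e : (fun y : Fin k → ℝ => y i ^ 2) = fun y => y i * y i := by
      funext y; ring
    rw [e]
    refine h2.congr_fderiv ?_
    ext u
    simp [two_mul, add_smul]
  simpa [DN] using HasFDerivAt.fun_sum h

lemma sum_mul_expand (a b a' b' : ℝ) (u w u' w' : Fin k → ℝ) :
    ∑ i, (a * u i + b * w i) * (a' * u' i + b' * w' i)
      = a*a' * ∑ i, u i * u' i + a*b' * ∑ i, u i * w' i
        + b*a' * ∑ i, w i * u' i + b*b' * ∑ i, w i * w' i := by
  simp only [mul_sum]
  rw [← sum_add_distrib, ← sum_add_distrib, ← sum_add_distrib]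
  exact sum_congr rfl fun i _ => by ring

noncomputable def qq (x : Fin (k+1) → ℝ) : ℝ := (∑ i, x i ^ 2) + 2 * x 0 + 1

noncomputable def ee : Fin (k+1) → ℝ := Fin.cons 1 0

lemma ee_zero : (ee (k := k)) 0 = 1 := rfl
lemma ee_succ (j : Fin k) : (ee (k := k)) j.succ = 0 := rfl

noncomputable def sig (x : Fin (k+1) → ℝ) : Fin (k+1) → ℝ :=
  (2 * (qq x)⁻¹) • (x + ee) - ee

lemma sig_apply (x : Fin (k+1) → ℝ) (i : Fin (k+1)) :
    sig x i = 2 * (qq x)⁻¹ * (x i + ee i) - ee i := rfl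

lemma sig_succ (x : Fin (k+1) → ℝ) (j : Fin k) :
    sig x j.succ = 2 * (qq x)⁻¹ * x j.succ := by
  rw [sig_apply, ee_succ]; ring

lemma sum_addee_mul_addee (x : Fin (k+1) → ℝ) :
    ∑ i, (x i + ee i) * (x i + ee i) = qq x := by
  simp [qq, ee, Fin.sum_univ_succ, add_mul, mul_add, sq]
  ring

lemma sum_addee_mul_ee (x : Fin (k+1) → ℝ) :
    ∑ i, (x i + ee i) * ee i = x 0 + 1 := by
  simp [ee, Fin.sum_univ_succ]

lemma sum_ee_mul_addee (x : Fin (k+1) → ℝ) :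
    ∑ i, ee i * (x i + ee i) = x 0 + 1 := by
  simp [ee, Fin.sum_univ_succ]

lemma sum_ee_mul_ee : ∑ i, (ee (k := k)) i * ee i = 1 := by
  simp [ee, Fin.sum_univ_succ]

lemma sum_sig_sq (x : Fin (k+1) → ℝ) :
    ∑ i, sig x i ^ 2
      = (2 * (qq x)⁻¹)^2 * qq x - 2 * (2 * (qq x)⁻¹) * (x 0 + 1) + 1 := by
  have e : ∀ i, sig x i ^ 2
      = (2 * (qq x)⁻¹ * (x i + ee i) + (-1) * ee i)
        * (2 * (qq x)⁻¹ * (x i + ee i) + (-1) * ee i) := by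
    intro i; rw [sig_apply]; ring
  rw [Finset.sum_congr rfl fun i _ => e i, sum_mul_expand,
    sum_addee_mul_addee, sum_addee_mul_ee, sum_ee_mul_addee, sum_ee_mul_ee]
  ring

lemma qq_sig (x : Fin (k+1) → ℝ) (h : qq x ≠ 0) : qq (sig x) = 4 / qq x := by
  have h0 : sig x 0 = 2 * (qq x)⁻¹ * (x 0 + 1) - 1 := by
    rw [sig_apply, ee_zero]
  rw [qq, sum_sig_sq, h0]
  field_simp
  ring

lemma sig_invol (x : Fin (k+1) → ℝ) (h : qq x ≠ 0) : sig (sig x) = x := by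
  have h4 : qq (sig x) = 4 / qq x := qq_sig x h
  funext i
  rw [sig_apply, h4, sig_apply]
  field_simp
  ring

lemma qq_on_S (x : Fin (k+1) → ℝ) (hx1 : ∑ i, x i ^ 2 = 1) :
    qq x = 2 + 2 * x 0 := by
  rw [qq, hx1]; ring

lemma sig_zero_on_S (x : Fin (k+1) → ℝ) (hx1 : ∑ i, x i ^ 2 = 1) (h : qq x ≠ 0) :
    sig x 0 = 0 := by
  have hq := qq_on_S x hx1
  rw [sig_apply, ee_zero]
  rw [hq] at h ⊢
  have h' : 1 + x 0 ≠ 0 := by intro h'; apply h; linarith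
  field_simp
  ring

noncomputable def Dq (x : Fin (k+1) → ℝ) : (Fin (k+1) → ℝ) →L[ℝ] ℝ :=
  DN x + (2:ℝ) • (ContinuousLinearMap.proj 0 : (Fin (k+1) → ℝ) →L[ℝ] ℝ)

lemma Dq_apply (x u : Fin (k+1) → ℝ) : Dq x u = (∑ i, 2 * x i * u i) + 2 * u 0 := by
  simp [Dq, DN_apply]

lemma hasFDerivAt_qq (x : Fin (k+1) → ℝ) : HasFDerivAt qq (Dq x) x := by
  have h1 := hasFDerivAt_sumsq x
  have h2 : HasFDerivAt (fun y : Fin (k+1) → ℝ => 2 * y 0)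
      ((2:ℝ) • (ContinuousLinearMap.proj 0 : (Fin (k+1) → ℝ) →L[ℝ] ℝ)) x :=
    (ContinuousLinearMap.proj (R := ℝ) (φ := fun _ : Fin (k+1) => ℝ) 0).hasFDerivAt.const_mul 2
  exact ((h1.add h2).add_const 1)

lemma hasFDerivAt_sig (x : Fin (k+1) → ℝ) (h : qq x ≠ 0) :
    HasFDerivAt sig
      ((2 * (qq x)⁻¹) • ContinuousLinearMap.id ℝ (Fin (k+1) → ℝ)
        + ((2:ℝ) • (-((qq x)^2)⁻¹ • Dq x)).smulRight (x + ee)) x := by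
  have hq := hasFDerivAt_qq x
  have hinv : HasFDerivAt (fun y => (qq y)⁻¹) ((-((qq x)^2)⁻¹) • Dq x) x :=
    (hasDerivAt_inv h).comp_hasFDerivAt x hq
  have hc := hinv.const_mul (2:ℝ)
  have hid : HasFDerivAt (fun y : Fin (k+1) → ℝ => y + ee)
      (ContinuousLinearMap.id ℝ (Fin (k+1) → ℝ)) x := (hasFDerivAt_id x).add_const ee
  have := hc.smul hid
  exact this.sub_const ee

end Stmt12Aux

set_option maxHeartbeats 1000000 in
open Stmt12Aux in
/-- In the half-space model of `ℍⁿ` (metric `δ_{ij}/xₙ²`, with `lastI` the index `n`),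
the radial projection `π(x) = x/|x|` (`|·|` the Euclidean norm) is a Riemannian
submersion onto `S = {|x| = 1, xₙ > 0}` with its induced metric: `dπ` maps tangent
vectors into tangent vectors of the sphere, kills the radial (orbit) direction, and
preserves the hyperbolic inner products on horizontal vectors (those Euclidean-orthogonal
to `x`); moreover `S` is isometric to hyperbolic space of dimension `n−1`, i.e. there is
a bijection `Φ` of `S` onto the upper half-space `{z : z_{n−1} > 0}` whose differential
pulls the metric `δ_{ij}/z_{n−1}²` back to the induced metric of `S`. -/
theorem stmt_12 {n : ℕ} (hn : 3 ≤ n)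
    (lastI : Fin n) (hlast : (lastI : ℕ) = n - 1)
    (lastI' : Fin (n-1)) (hlast' : (lastI' : ℕ) = n - 2)
    (π : (Fin n → ℝ) → (Fin n → ℝ))
    (hπ : ∀ x, π x = (Real.sqrt (∑ i, x i ^ 2))⁻¹ • x) :
    (∀ x : Fin n → ℝ, 0 < x lastI →
      (fderiv ℝ π x x = 0) ∧
      ∀ u v : Fin n → ℝ, (∑ i, u i * x i) = 0 → (∑ i, v i * x i) = 0 →
        (∑ i, fderiv ℝ π x u i * π x i) = 0 ∧
        (∑ i, fderiv ℝ π x u i * fderiv ℝ π x v i) / (π x lastI) ^ 2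
          = (∑ i, u i * v i) / (x lastI) ^ 2) ∧
    (∃ Φ : (Fin n → ℝ) → (Fin (n-1) → ℝ),
      Set.BijOn Φ {x | ∑ i, x i ^ 2 = 1 ∧ 0 < x lastI} {z | 0 < z lastI'} ∧
      ∀ x : Fin n → ℝ, (∑ i, x i ^ 2 = 1 ∧ 0 < x lastI) →
        ∀ u v : Fin n → ℝ, (∑ i, u i * x i) = 0 → (∑ i, v i * x i) = 0 →
          (∑ i, fderiv ℝ Φ x u i * fderiv ℝ Φ x v i) / (Φ x lastI') ^ 2
            = (∑ i, u i * v i) / (x lastI) ^ 2) := by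
  have hπ' : π = fun x => (Real.sqrt (∑ i, x i ^ 2))⁻¹ • x := funext hπ
  subst hπ'
  obtain ⟨m, rfl⟩ : ∃ m, n = m + 1 := ⟨n - 1, by omega⟩
  have hm : 2 ≤ m := by omega
  have hlastv : (lastI : ℕ) = m := by omega
  have hlastv' : (lastI' : ℕ) = m - 1 := by omega
  have hsucc : Fin.succ (lastI' : Fin m) = lastI := by
    apply Fin.ext
    simp [Fin.val_succ, hlastv, hlastv']
    omega
  have h0last : (0 : Fin (m+1)) ≠ lastI := by
    intro h
    have := congrArg Fin.val h
    simp [hlastv] at this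
    omega
  constructor
  · -- Part 1: the radial projection is a Riemannian submersion
    intro x hx
    have hNpos : 0 < ∑ i, x i ^ 2 := by
      have h1 : x lastI ^ 2 ≤ ∑ i, x i ^ 2 :=
        Finset.single_le_sum (f := fun i => x i ^ 2) (fun i _ => sq_nonneg _) (mem_univ lastI)
      nlinarith [pow_pos hx 2]
    set s : ℝ := Real.sqrt (∑ i, x i ^ 2) with hs_def
    have hs : 0 < s := Real.sqrt_pos.2 hNpos
    have hs2 : s ^ 2 = ∑ i, x i ^ 2 := Real.sq_sqrt hNpos.le
    have hsqrt : HasFDerivAt (fun y : Fin (m+1) → ℝ => Real.sqrt (∑ i, y i ^ 2))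
        ((1/(2*s)) • DN x) x :=
      (Real.hasDerivAt_sqrt hNpos.ne').comp_hasFDerivAt x (hasFDerivAt_sumsq x)
    have hinv : HasFDerivAt (fun y : Fin (m+1) → ℝ => (Real.sqrt (∑ i, y i ^ 2))⁻¹)
        ((-(s^2)⁻¹) • ((1/(2*s)) • DN x)) x :=
      (hasDerivAt_inv hs.ne').comp_hasFDerivAt x hsqrt
    have hd : HasFDerivAt (fun y : Fin (m+1) → ℝ => (Real.sqrt (∑ i, y i ^ 2))⁻¹ • y)
        (s⁻¹ • ContinuousLinearMap.id ℝ (Fin (m+1) → ℝ)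
          + ((-(s^2)⁻¹) • ((1/(2*s)) • DN x)).smulRight x) x :=
      hinv.smul (hasFDerivAt_id x)
    have hL : ∀ u, fderiv ℝ (fun y : Fin (m+1) → ℝ => (Real.sqrt (∑ i, y i ^ 2))⁻¹ • y) x u
        = fun i => s⁻¹ * u i + (-(s^2)⁻¹ * ((1/(2*s)) * (∑ j, 2 * x j * u j))) * x i := by
      intro u
      rw [hd.fderiv]
      funext i
      simp [DN_apply, mul_comm]
    refine ⟨?_, ?_⟩
    · rw [hL x]
      funext i
      have hxx : ∑ j, 2 * x j * x j = 2 * (∑ j, x j ^ 2) := by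
        rw [Finset.mul_sum]; exact sum_congr rfl fun j _ => by ring
      rw [hxx, ← hs2]
      show s⁻¹ * x i + -(s ^ 2)⁻¹ * (1 / (2 * s) * (2 * s ^ 2)) * x i = 0
      field_simp
      ring
    · intro u v hu hv
      have key : ∀ w : Fin (m+1) → ℝ, (∑ i, w i * x i) = 0 →
          fderiv ℝ (fun y : Fin (m+1) → ℝ => (Real.sqrt (∑ i, y i ^ 2))⁻¹ • y) x w
            = fun i => s⁻¹ * w i := by
        intro w hw
        rw [hL w]
        funext i
        have hxw : ∑ j, 2 * x j * w j = 2 * ∑ j, w j * x j := by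
          rw [Finset.mul_sum]; exact sum_congr rfl fun j _ => by ring
        rw [hxw, hw]
        ring
      rw [key u hu, key v hv]
      have hπx : ∀ i, ((Real.sqrt (∑ i, x i ^ 2))⁻¹ • x) i = s⁻¹ * x i := by
        intro i; simp [hs_def]
      constructor
      · show (∑ i, (s⁻¹ * u i) * ((Real.sqrt (∑ i, x i ^ 2))⁻¹ • x) i) = 0
        calc ∑ i, (s⁻¹ * u i) * ((Real.sqrt (∑ i, x i ^ 2))⁻¹ • x) i
            = ∑ i, s⁻¹ * s⁻¹ * (u i * x i) := by
              exact sum_congr rfl fun i _ => by rw [hπx i]; ring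
          _ = s⁻¹ * s⁻¹ * ∑ i, u i * x i := by rw [Finset.mul_sum]
          _ = 0 := by rw [hu, mul_zero]
      · show (∑ i, (s⁻¹ * u i) * (s⁻¹ * v i)) / (((Real.sqrt (∑ i, x i ^ 2))⁻¹ • x) lastI) ^ 2
          = (∑ i, u i * v i) / (x lastI) ^ 2
        rw [hπx lastI]
        have huv : ∑ i, (s⁻¹ * u i) * (s⁻¹ * v i) = s⁻¹ * s⁻¹ * ∑ i, u i * v i := by
          rw [Finset.mul_sum]; exact sum_congr rfl fun i _ => by ring
        rw [huv]
        rw [div_eq_div_iff (by positivity) (by positivity)]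
        ring
  · -- Part 2: the hemisphere is isometric to hyperbolic (n-1)-space
    set P : (Fin (m+1) → ℝ) →L[ℝ] (Fin m → ℝ) :=
      ContinuousLinearMap.pi
        (fun j : Fin m => (ContinuousLinearMap.proj j.succ : (Fin (m+1) → ℝ) →L[ℝ] ℝ))
      with hP_def
    have hPapp : ∀ (w : Fin (m+1) → ℝ) (j : Fin m), P w j = w j.succ := by
      intro w j; simp [hP_def]
    -- positivity of qq on the hemisphere
    have hqpos : ∀ x : Fin (m+1) → ℝ, (∑ i, x i ^ 2 = 1) → 0 < x lastI → 0 < qq x := by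
      intro x hx1 hxl
      have hpair : x 0 ^ 2 + x lastI ^ 2 ≤ 1 := by
        have h2 := Finset.sum_le_sum_of_subset_of_nonneg
          (Finset.subset_univ ({0, lastI} : Finset (Fin (m+1))))
          (fun i _ _ => sq_nonneg (x i))
        rw [Finset.sum_pair h0last, hx1] at h2
        exact h2
      rw [qq_on_S x hx1]
      nlinarith [sq_nonneg (x 0 + 1), pow_pos hxl 2]
    refine ⟨fun y => P (sig y), ⟨?_, ?_, ?_⟩, ?_⟩
    · -- MapsTo
      rintro x ⟨hx1, hxl⟩
      have hq := hqpos x hx1 hxl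
      show 0 < P (sig x) lastI'
      rw [hPapp, sig_succ, hsucc]
      exact mul_pos (mul_pos two_pos (inv_pos.2 hq)) hxl
    · -- InjOn
      rintro x₁ ⟨hx1, hl1⟩ x₂ ⟨hx2, hl2⟩ hΦeq
      have hq1 := (hqpos x₁ hx1 hl1).ne'
      have hq2 := (hqpos x₂ hx2 hl2).ne'
      have hsig : sig x₁ = sig x₂ := by
        funext i
        induction i using Fin.cases with
        | zero => rw [sig_zero_on_S x₁ hx1 hq1, sig_zero_on_S x₂ hx2 hq2]
        | succ j =>
          have h := congrFun hΦeq j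
          simpa only [hPapp] using h
      calc x₁ = sig (sig x₁) := (sig_invol x₁ hq1).symm
        _ = sig (sig x₂) := by rw [hsig]
        _ = x₂ := sig_invol x₂ hq2
    · -- SurjOn
      rintro z hz
      set y : Fin (m+1) → ℝ := Fin.cons 0 z with hy_def
      have hy0 : y 0 = 0 := by simp [hy_def]
      have hys : ∀ j : Fin m, y j.succ = z j := by
        intro j; simp [hy_def]
      have hqy : 0 < qq y := by
        have h1 : (0:ℝ) ≤ ∑ i, y i ^ 2 := Finset.sum_nonneg fun i _ => sq_nonneg _
        rw [qq, hy0]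
        linarith
      have hS1 : ∑ i, sig y i ^ 2 = 1 := by
        rw [sum_sig_sq, hy0]
        field_simp
        ring
      have hzl : 0 < z lastI' := hz
      have hSl : 0 < sig y lastI := by
        rw [← hsucc, sig_succ, hys]
        exact mul_pos (mul_pos two_pos (inv_pos.2 hqy)) hzl
      refine ⟨sig y, ⟨hS1, hSl⟩, ?_⟩
      show P (sig (sig y)) = z
      rw [sig_invol y hqy.ne']
      funext j
      rw [hPapp, hys]
    · -- the metric identity for Φ
      rintro x ⟨hx1, hxl⟩ u v hu hv
      have hq := hqpos x hx1 hxl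
      have hqne := hq.ne'
      have hd' : HasFDerivAt (fun y => P (sig y))
          (P.comp ((2 * (qq x)⁻¹) • ContinuousLinearMap.id ℝ (Fin (m+1) → ℝ)
            + ((2:ℝ) • (-((qq x)^2)⁻¹ • Dq x)).smulRight (x + ee))) x :=
        (P.hasFDerivAt).comp x (hasFDerivAt_sig x hqne)
      set q := qq x with hq_def
      set a := 2 * q⁻¹ with ha
      set bu := -(4 * u 0 * (q^2)⁻¹) with hbu
      set bv := -(4 * v 0 * (q^2)⁻¹) with hbv
      have hxv : ∑ i, x i * v i = 0 := by
        rw [← hv]; exact sum_congr rfl fun i _ => mul_comm _ _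
      have hxu : ∑ i, x i * u i = 0 := by
        rw [← hu]; exact sum_congr rfl fun i _ => mul_comm _ _
      have hxx : ∑ i, x i * x i = 1 := by
        rw [← hx1]; exact sum_congr rfl fun i _ => (sq (x i)).symm
      have hL : ∀ w : Fin (m+1) → ℝ, (∑ i, w i * x i) = 0 → ∀ j : Fin m,
          fderiv ℝ (fun y => P (sig y)) x w j
            = a * w j.succ + (-(4 * w 0 * (q^2)⁻¹)) * x j.succ := by
        intro w hw j
        have hxw : ∑ i, x i * w i = 0 := by
          rw [← hw]; exact sum_congr rfl fun i _ => mul_comm _ _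
        have hDq : Dq x w = 2 * w 0 := by
          rw [Dq_apply]
          have h2 : ∑ i, 2 * x i * w i = 2 * ∑ i, x i * w i := by
            rw [Finset.mul_sum]; exact sum_congr rfl fun i _ => by ring
          rw [h2, hxw]; ring
        rw [hd'.fderiv]
        rw [ContinuousLinearMap.comp_apply, hPapp]
        simp only [ContinuousLinearMap.add_apply, ContinuousLinearMap.smul_apply,
          ContinuousLinearMap.id_apply, ContinuousLinearMap.smulRight_apply, hDq,
          Pi.add_apply, Pi.smul_apply, smul_eq_mul, ee_succ, ha, hq_def]
        ring
      have hΦl : P (sig x) lastI' = a * x lastI := by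
        rw [hPapp, sig_succ, hsucc, ha, hq_def]
      have hstep : (∑ i, fderiv ℝ (fun y => P (sig y)) x u i
              * fderiv ℝ (fun y => P (sig y)) x v i)
          = ∑ j : Fin m, (a * u j.succ + bu * x j.succ) * (a * v j.succ + bv * x j.succ) := by
        refine sum_congr rfl fun j _ => ?_
        rw [hL u hu j, hL v hv j, ← hbu, ← hbv]
      have huniv : (∑ i : Fin (m+1), (a * u i + bu * x i) * (a * v i + bv * x i))
          = (a * u 0 + bu * x 0) * (a * v 0 + bv * x 0)
            + ∑ j : Fin m, (a * u j.succ + bu * x j.succ) * (a * v j.succ + bv * x j.succ) :=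
        Fin.sum_univ_succ _
      have hexpand := sum_mul_expand a bu a bv u x v x
      rw [hu, hxv, hxx] at hexpand
      have hq2 : q = 2 + 2 * x 0 := by rw [hq_def]; exact qq_on_S x hx1
      have hq20 : (2 + 2 * x 0) ≠ 0 := by rw [← hq2]; exact hqne
      have hf0 : (a * u 0 + bu * x 0) * (a * v 0 + bv * x 0) = bu * bv := by
        rw [ha, hbu, hbv, hq2]
        field_simp
        ring
      have hS : (∑ i, fderiv ℝ (fun y => P (sig y)) x u i
              * fderiv ℝ (fun y => P (sig y)) x v i) = a * a * ∑ i, u i * v i := by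
        linarith [hstep, huniv, hexpand, hf0]
      show (∑ i, fderiv ℝ (fun y => P (sig y)) x u i
              * fderiv ℝ (fun y => P (sig y)) x v i) / (P (sig x) lastI') ^ 2
          = (∑ i, u i * v i) / (x lastI) ^ 2
      rw [hS, hΦl]
      have ha0 : a ≠ 0 := by
        rw [ha]; exact (mul_pos two_pos (inv_pos.2 hq)).ne'
      have hxl0 : x lastI ≠ 0 := hxl.ne'
      rw [div_eq_div_iff (by positivity) (by positivity)]
      ring
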